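/- arXiv:math/0304124 — 2 statements merged into one kernel-verified Lean document; each statement's English description precedes it below -/
import Mathlib

section
/- For every k > 0 and n ≥ 2, suppose: (a) for general points, the existence of a degree-d hypersurface with multiplicities m_i at p_i implies the existence, for each permutation σ, of a degree-d hypersurface with multiplicities m_{σ(i)} at p_i; (b) (Hochster–Huneke) if I is the radical ideal of r points in P^n and a polynomial of degree (k+n)D has multiplicity ≥ (k+n)M at each point, then there is a polynomial of degree t ≤ (k+n)D/M with multiplicity ≥ k+1 at each point; (c) (Alexander–Hirschowitz) there exists s_k(n) such that for r ≥ s_k(n) general points, any hypersurface with multiplicity ≥ k+1 at each of the r points has degree ≥ (k+1)·r^{1/n}. Then for r ≥ s_k(n), all m = (m_1,...,m_r), and general points p_1,...,p_r: α_m(p_1,...,p_r) ≥ (Σ m_i)/r^{(n-1)/n} · (k+1)/(k+n). -/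
open MvPolynomial

private lemma prod_mem_pow_sum {R : Type*} [CommRing R] (I : Ideal R) {ι : Type*}
    (s : Finset ι) (f : ι → R) (e : ι → ℕ) (h : ∀ i ∈ s, f i ∈ I ^ e i) :
    ∏ i ∈ s, f i ∈ I ^ (∑ i ∈ s, e i) := by
  classical
  induction s using Finset.induction with
  | empty => simp
  | insert a s hx ih =>
    rw [Finset.prod_insert hx, Finset.sum_insert hx, pow_add]
    exact Ideal.mul_mem_mul (h a (Finset.mem_insert_self a s))
      (ih fun i hi => h i (Finset.mem_insert_of_mem hi))

/-- The homogeneous ideal of the point `p = [ξ₀ : ⋯ : ξₙ]`. -/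
noncomputable def pointIdeal {n : ℕ} {k : Type*} [Field k] (ξ : Fin (n + 1) → k) :
    Ideal (MvPolynomial (Fin (n + 1)) k) :=
  Ideal.span {f | ∃ i j : Fin (n + 1), f = C (ξ i) * X j - C (ξ j) * X i}

/-- Key estimate in the proof of Corollary 1.4. Fix `K > 0`, `n ≥ 2`, and `r` general
points `p₁,…,p_r` of `ℙⁿ`. Assume:
(a) (genericity/symmetry) the existence of a degree-`d` form with multiplicities `mᵢ`
    at the `pᵢ` implies, for each permutation `σ`, the existence of a degree-`d` form
    with multiplicity `m_{σ(i)}` at `pᵢ`;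
(b) (Hochster–Huneke) a nonzero form of degree `(K+n)·D` with multiplicity at least
    `(K+n)·M` at every point produces a nonzero form of degree `t ≤ (K+n)·D/M` with
    multiplicity at least `K+1` at every point;
(c) (Alexander–Hirschowitz) any nonzero form with multiplicity at least `K+1` at every
    point has degree at least `(K+1)·r^{1/n}` (valid for `r ≥ s_K(n)` general points).

Then `α_m(p₁,…,p_r) ≥ (Σ mᵢ) / r^{(n-1)/n} · (K+1)/(K+n)`; i.e. every nonzero
degree-`d` form with multiplicities `mᵢ` at the `pᵢ` satisfies this lower bound on `d`. -/
theorem alpha_lower_bound_of_HH_AH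
    {k : Type*} [Field k] [IsAlgClosed k] {n r : ℕ} (hn : 2 ≤ n) (hr : 1 ≤ r)
    (K : ℕ) (hK : 0 < K)
    (p : Fin r → (Fin (n + 1) → k)) (hp0 : ∀ i, p i ≠ 0)
    (hdist : ∀ i j : Fin r, i ≠ j → ∀ c : k, p j ≠ c • p i)
    (ha : ∀ (d : ℕ) (m : Fin r → ℕ),
      (∃ F : MvPolynomial (Fin (n + 1)) k, F ≠ 0 ∧ F.IsHomogeneous d ∧
        ∀ i, F ∈ (pointIdeal (p i)) ^ (m i)) →
      ∀ σ : Equiv.Perm (Fin r),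
        ∃ F : MvPolynomial (Fin (n + 1)) k, F ≠ 0 ∧ F.IsHomogeneous d ∧
          ∀ i, F ∈ (pointIdeal (p i)) ^ (m (σ i)))
    (hb : ∀ D M : ℕ, 0 < M →
      (∃ G : MvPolynomial (Fin (n + 1)) k, G ≠ 0 ∧ G.IsHomogeneous ((K + n) * D) ∧
        ∀ i, G ∈ (pointIdeal (p i)) ^ ((K + n) * M)) →
      ∃ t : ℕ, (t : ℝ) * M ≤ (K + n) * D ∧
        ∃ H : MvPolynomial (Fin (n + 1)) k, H ≠ 0 ∧ H.IsHomogeneous t ∧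
          ∀ i, H ∈ (pointIdeal (p i)) ^ (K + 1))
    (hc : ∀ t : ℕ,
      (∃ H : MvPolynomial (Fin (n + 1)) k, H ≠ 0 ∧ H.IsHomogeneous t ∧
        ∀ i, H ∈ (pointIdeal (p i)) ^ (K + 1)) →
      ((K : ℝ) + 1) * (r : ℝ) ^ ((1 : ℝ) / n) ≤ t) :
    ∀ (d : ℕ) (m : Fin r → ℕ),
      (∃ F : MvPolynomial (Fin (n + 1)) k, F ≠ 0 ∧ F.IsHomogeneous d ∧
        ∀ i, F ∈ (pointIdeal (p i)) ^ (m i)) →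
      (∑ i, (m i : ℝ)) / (r : ℝ) ^ (((n : ℝ) - 1) / n) * (((K : ℝ) + 1) / ((K : ℝ) + n))
        ≤ d := by
  classical
  intro d m hF
  have hn0 : (n : ℝ) ≠ 0 := by positivity
  have hr0 : (0 : ℝ) < r := by exact_mod_cast hr
  -- trivial case : all multiplicities zero
  by_cases hS0 : ∑ i, m i = 0
  · have : (∑ i, (m i : ℝ)) = 0 := by exact_mod_cast hS0
    rw [this]
    simp only [zero_div, zero_mul]
    positivity
  -- symmetrize
  choose Fσ hFσ0 hFσhom hFσmem using ha d m hF
  set N := Fintype.card (Equiv.Perm (Fin r)) with hN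
  have hNpos : 0 < N := Fintype.card_pos
  set P : MvPolynomial (Fin (n + 1)) k := ∏ σ : Equiv.Perm (Fin r), Fσ σ with hP
  have hP0 : P ≠ 0 := Finset.prod_ne_zero_iff.2 fun σ _ => hFσ0 σ
  have hPhom : P.IsHomogeneous (N * d) := by
    have := MvPolynomial.IsHomogeneous.prod Finset.univ Fσ (fun _ => d)
      (fun σ _ => hFσhom σ)
    simpa [Finset.sum_const, mul_comm] using this
  have i₀ : Fin r := ⟨0, hr⟩
  set M : ℕ := ∑ σ : Equiv.Perm (Fin r), m (σ i₀) with hM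
  have hMeq : ∀ i : Fin r, ∑ σ : Equiv.Perm (Fin r), m (σ i) = M := by
    intro i
    exact Fintype.sum_equiv (Equiv.mulRight (Equiv.swap i i₀))
      (fun σ => m (σ i)) (fun σ => m (σ i₀)) (by simp [Equiv.Perm.mul_apply])
  have hPmem : ∀ i, P ∈ (pointIdeal (p i)) ^ M := by
    intro i
    rw [← hMeq i]
    exact prod_mem_pow_sum _ _ _ _ fun σ _ => hFσmem σ i
  -- relation r * M = N * ∑ m
  have hrM : r * M = N * ∑ i, m i := by
    calc r * M = ∑ _i : Fin r, M := by simp [mul_comm]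
    _ = ∑ i : Fin r, ∑ σ : Equiv.Perm (Fin r), m (σ i) := by
        refine Finset.sum_congr rfl fun i _ => (hMeq i).symm
    _ = ∑ σ : Equiv.Perm (Fin r), ∑ i : Fin r, m (σ i) := Finset.sum_comm
    _ = ∑ _σ : Equiv.Perm (Fin r), ∑ i, m i := by
        refine Finset.sum_congr rfl fun σ _ => Equiv.sum_comp σ m
    _ = N * ∑ i, m i := by simp [mul_comm]; exact Or.inl rfl
  have hMpos : 0 < M := by
    rcases Nat.pos_of_ne_zero hS0 with h
    have : 0 < r * M := by rw [hrM]; exact Nat.mul_pos hNpos h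
    exact Nat.pos_of_mul_pos_left (by rwa [mul_comm] at this)
  -- apply Hochster–Huneke to P^(K+n)
  obtain ⟨t, htM, hH⟩ := hb (N * d) M hMpos ⟨P ^ (K + n), pow_ne_zero _ hP0,
    by simpa [mul_comm] using hPhom.pow (K + n),
    fun i => by
      rw [mul_comm, pow_mul]
      exact Ideal.pow_mem_pow (hPmem i) _⟩
  have hct := hc t hH
  -- combine into the key real inequality
  set c : ℝ := (r : ℝ) ^ ((1 : ℝ) / n) with hcdef
  have hcpos : 0 < c := Real.rpow_pos_of_pos hr0 _
  set S : ℝ := ∑ i, (m i : ℝ) with hSdef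
  have hSpos : 0 < S := by
    have : (0 : ℝ) < (∑ i, m i : ℕ) := by exact_mod_cast Nat.pos_of_ne_zero hS0
    simpa [hSdef] using this
  have hrMR : (r : ℝ) * (M : ℝ) = (N : ℝ) * S := by
    have := hrM
    push_cast [hSdef]
    exact_mod_cast congrArg (fun x : ℕ => (x : ℝ)) this
  have hkey : ((K : ℝ) + 1) * c * (M : ℝ) ≤ ((K : ℝ) + (n : ℝ)) * ((N : ℝ) * d) := by
    calc ((K : ℝ) + 1) * c * (M : ℝ) ≤ (t : ℝ) * (M : ℝ) := by
          have hM0 : (0 : ℝ) ≤ (M : ℝ) := by positivity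
          exact mul_le_mul_of_nonneg_right hct hM0
    _ ≤ ((K : ℝ) + (n : ℝ)) * ((N : ℝ) * d) := by
          convert htM using 2 <;> push_cast <;> ring
  have hkey2 : ((K : ℝ) + 1) * c * S ≤ ((K : ℝ) + (n : ℝ)) * ((r : ℝ) * d) := by
    have hNR : (0 : ℝ) < (N : ℝ) := by exact_mod_cast hNpos
    have := mul_le_mul_of_nonneg_left hkey hr0.le
    rw [show (r : ℝ) * (((K : ℝ) + 1) * c * (M : ℝ))
        = ((K : ℝ) + 1) * c * ((r : ℝ) * (M : ℝ)) by ring, hrMR] at this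
    have h2 : (N : ℝ) * (((K : ℝ) + 1) * c * S)
        ≤ (N : ℝ) * (((K : ℝ) + (n : ℝ)) * ((r : ℝ) * d)) := by nlinarith
    exact le_of_mul_le_mul_left h2 hNR
  -- rewrite the exponent
  have hexp : (r : ℝ) ^ (((n : ℝ) - 1) / n) = (r : ℝ) / c := by
    rw [show ((n : ℝ) - 1) / n = 1 - 1 / n by field_simp,
      Real.rpow_sub hr0, Real.rpow_one, hcdef]
  rw [hexp, div_div_eq_mul_div, div_mul_div_comm, div_le_iff₀ (by positivity)]
  have hKn : (0 : ℝ) < (K : ℝ) + (n : ℝ) := by positivity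
  nlinarith [hkey2]
end

section
/- Let k be a field, and let x_1,...,x_n, with n ≥ 2, be formal variables. For ξ = (ξ_1,...,ξ_n) ∈ k^n nonzero with ξ_i ≠ 0 for some i, let I_ξ ⊆ k[[x_1,...,x_n]] be the ideal generated by ξ_i x_j − ξ_j x_i for all i,j. Then the quotient k[[x_1,...,x_n]]/I_ξ is isomorphic to a formal power series ring in one variable k[[t]]; in particular I_ξ is a prime ideal and the quotient is a regular local ring of dimension 1. -/
/-- The ideal of the line through the origin in direction `ξ`: generated by
`ξᵢ xⱼ − ξⱼ xᵢ` in `k[[x₁,…,xₙ]]`. -/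
noncomputable def lineIdeal {n : ℕ} {k : Type*} [Field k] (ξ : Fin n → k) :
    Ideal (MvPowerSeries (Fin n) k) :=
  Ideal.span {f | ∃ i j : Fin n,
    f = MvPowerSeries.C (σ := Fin n) (R := k) (ξ i) * MvPowerSeries.X j -
        MvPowerSeries.C (σ := Fin n) (R := k) (ξ j) * MvPowerSeries.X i}

open Finsupp MvPowerSeries

namespace LineAux

variable {n : ℕ} {k : Type*} [Field k]

/-- Substitute `x_j := c • x_i` in a multivariate power series (coefficientwise). -/
noncomputable def S (c : k) (i j : Fin n) (g : MvPowerSeries (Fin n) k) :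
    MvPowerSeries (Fin n) k :=
  fun d => if d j = 0 then
    ∑ a ∈ Finset.range (d i + 1), g (d + Finsupp.single j a - Finsupp.single i a) * c ^ a
  else 0

/-- Quotient upon division by `x_j - c x_i`. -/
noncomputable def Q (c : k) (i j : Fin n) (g : MvPowerSeries (Fin n) k) :
    MvPowerSeries (Fin n) k :=
  fun d => ∑ b ∈ Finset.range (d i + 1),
    g (d + Finsupp.single j (b + 1) - Finsupp.single i b) * c ^ b

theorem coeff_S (c : k) (i j : Fin n) (g : MvPowerSeries (Fin n) k) (d : Fin n →₀ ℕ) :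
    MvPowerSeries.coeff (R := k) d (S c i j g) = if d j = 0 then
      ∑ a ∈ Finset.range (d i + 1),
        MvPowerSeries.coeff (R := k) (d + Finsupp.single j a - Finsupp.single i a) g * c ^ a
    else 0 := rfl

theorem coeff_Q (c : k) (i j : Fin n) (g : MvPowerSeries (Fin n) k) (d : Fin n →₀ ℕ) :
    MvPowerSeries.coeff (R := k) d (Q c i j g) = ∑ b ∈ Finset.range (d i + 1),
      MvPowerSeries.coeff (R := k) (d + Finsupp.single j (b + 1) - Finsupp.single i b) g * c ^ b := rfl

theorem coeff_mul_X' (g : MvPowerSeries (Fin n) k) (s : Fin n) (d : Fin n →₀ ℕ) :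
    MvPowerSeries.coeff (R := k) d (g * X s) =
      if d s = 0 then 0 else MvPowerSeries.coeff (R := k) (d - Finsupp.single s 1) g := by
  classical
  rw [X_def, coeff_mul_monomial]
  by_cases h : d s = 0
  · rw [if_neg, if_pos h]
    intro hle
    have := hle s
    simp [h] at this
  · rw [if_pos, if_neg h, mul_one]
    rw [Finsupp.single_le_iff]
    omega

theorem division (c : k) (i j : Fin n) (hij : j ≠ i) (g : MvPowerSeries (Fin n) k) :
    g = Q c i j g * (X j - MvPowerSeries.C (σ := Fin n) (R := k) c * X i) + S c i j g := by
  classical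
  apply MvPowerSeries.ext
  intro d
  rw [map_add, mul_sub, map_sub, coeff_mul_X', mul_left_comm (Q c i j g), coeff_C_mul,
    coeff_mul_X', coeff_S]
  set F : ℕ → k := fun a =>
    MvPowerSeries.coeff (R := k) (d + Finsupp.single j a - Finsupp.single i a) g * c ^ a with hF
  have hsubJ : d j ≠ 0 → (d - Finsupp.single j 1 : Fin n →₀ ℕ) i = d i := by
    intro _
    rw [Finsupp.tsub_apply, Finsupp.single_apply, if_neg hij]
    simp
  have hsubI : (d - Finsupp.single i 1 : Fin n →₀ ℕ) i = d i - 1 := by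
    rw [Finsupp.tsub_apply, Finsupp.single_apply, if_pos rfl]
  have hA : d j ≠ 0 → ∀ b : ℕ,
      d - Finsupp.single j 1 + Finsupp.single j (b + 1) - Finsupp.single i b
        = d + Finsupp.single j b - Finsupp.single i b := by
    intro hdj b
    have hdj' : 1 ≤ d j := Nat.one_le_iff_ne_zero.mpr hdj
    ext t
    simp only [Finsupp.tsub_apply, Finsupp.add_apply, Finsupp.single_apply]
    rcases eq_or_ne j t with rfl | h1
    · simp [Ne.symm hij]
      omega
    · rcases eq_or_ne i t with rfl | h2
      · simp [h1]
      · simp [h1, h2]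
  have hB : ∀ b : ℕ,
      d - Finsupp.single i 1 + Finsupp.single j (b + 1) - Finsupp.single i b
        = d + Finsupp.single j (b + 1) - Finsupp.single i (b + 1) := by
    intro b
    ext t
    simp only [Finsupp.tsub_apply, Finsupp.add_apply, Finsupp.single_apply]
    rcases eq_or_ne j t with rfl | h1
    · simp [Ne.symm hij]
    · rcases eq_or_ne i t with rfl | h2
      · simp [h1]
        omega
      · simp [h1, h2]
  have hQJ : d j ≠ 0 → MvPowerSeries.coeff (R := k) (d - Finsupp.single j 1) (Q c i j g)
      = ∑ b ∈ Finset.range (d i + 1), F b := by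
    intro hdj
    rw [coeff_Q]
    rw [hsubJ hdj]
    refine Finset.sum_congr rfl fun b _ => ?_
    rw [hA hdj b]
  have hQI : c * MvPowerSeries.coeff (R := k) (d - Finsupp.single i 1) (Q c i j g)
      = ∑ b ∈ Finset.range (d i - 1 + 1), F (b + 1) := by
    rw [coeff_Q, hsubI, Finset.mul_sum]
    refine Finset.sum_congr rfl fun b _ => ?_
    rw [hB b, hF]
    ring
  have hF0 : F 0 = MvPowerSeries.coeff (R := k) d g := by simp [hF]
  by_cases hdj : d j = 0
  · rw [if_pos hdj, if_pos hdj]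
    by_cases hdi : d i = 0
    · rw [if_pos hdi, hdi]
      simp [hF0]
    · rw [if_neg hdi, hQI, show d i + 1 = (d i - 1 + 1) + 1 by omega,
        Finset.sum_range_succ' F (d i - 1 + 1)]
      rw [hF0]
      ring
  · rw [if_neg hdj, if_neg hdj, hQJ hdj]
    by_cases hdi : d i = 0
    · rw [if_pos hdi, hdi]
      simp [hF0]
    · rw [if_neg hdi, hQI, show d i + 1 = (d i - 1 + 1) + 1 by omega,
        Finset.sum_range_succ' F (d i - 1 + 1)]
      rw [hF0]
      ring


theorem S_support_self (c : k) (i j : Fin n) (g : MvPowerSeries (Fin n) k)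
    (d : Fin n →₀ ℕ) (hd : d j ≠ 0) : S c i j g d = 0 := if_neg hd

theorem S_support_other (c : k) (i j l : Fin n) (hli : l ≠ i) (hlj : l ≠ j)
    (g : MvPowerSeries (Fin n) k) (hg : ∀ d : Fin n →₀ ℕ, d l ≠ 0 → g d = 0)
    (d : Fin n →₀ ℕ) (hd : d l ≠ 0) : S c i j g d = 0 := by
  rw [S]
  split
  · refine Finset.sum_eq_zero fun a _ => ?_
    rw [hg _ ?_, zero_mul]
    rw [Finsupp.tsub_apply, Finsupp.add_apply, Finsupp.single_apply, Finsupp.single_apply,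
      if_neg (fun h => hlj h.symm), if_neg (fun h => hli h.symm)]
    simpa using hd
  · rfl

/-- Iterated substitution along a list of variables. -/
noncomputable def T (c : Fin n → k) (i : Fin n) (L : List (Fin n))
    (f : MvPowerSeries (Fin n) k) : MvPowerSeries (Fin n) k :=
  L.foldr (fun j g => S (c j) i j g) f

theorem T_nil (c : Fin n → k) (i : Fin n) (f : MvPowerSeries (Fin n) k) :
    T c i [] f = f := rfl

theorem T_cons (c : Fin n → k) (i : Fin n) (j : Fin n) (L : List (Fin n))
    (f : MvPowerSeries (Fin n) k) : T c i (j :: L) f = S (c j) i j (T c i L f) := rfl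

theorem T_support (c : Fin n → k) (i : Fin n) (L : List (Fin n)) (f : MvPowerSeries (Fin n) k)
    (l : Fin n) : (∀ j ∈ L, j ≠ i) → l ∈ L → ∀ d : Fin n →₀ ℕ,
      d l ≠ 0 → T c i L f d = 0 := by
  induction L with
  | nil => intro _ hl; simp at hl
  | cons j L ih =>
    intro hL hl d hd
    rw [T_cons]
    rcases eq_or_ne l j with rfl | hlj
    · exact S_support_self _ _ _ _ _ hd
    · have hl' : l ∈ L := by
        rcases List.mem_cons.mp hl with h | h
        · exact absurd h hlj
        · exact h
      exact S_support_other _ _ _ _ (hL l hl) hlj _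
        (fun e he => ih (fun j' hj' => hL j' (List.mem_cons_of_mem _ hj')) hl' e he) d hd

theorem sub_T_mem (c : Fin n → k) (i : Fin n) (L : List (Fin n)) (hL : ∀ j ∈ L, j ≠ i)
    (I : Ideal (MvPowerSeries (Fin n) k))
    (hI : ∀ j ∈ L, X j - MvPowerSeries.C (σ := Fin n) (R := k) (c j) * X i ∈ I)
    (f : MvPowerSeries (Fin n) k) : f - T c i L f ∈ I := by
  induction L with
  | nil => simpa [T_nil] using I.zero_mem
  | cons j L ih =>
    rw [T_cons]
    have h1 : f - T c i L f ∈ I :=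
      ih (fun j' hj' => hL j' (List.mem_cons_of_mem _ hj'))
        (fun j' hj' => hI j' (List.mem_cons_of_mem _ hj'))
    have h2 : T c i L f - S (c j) i j (T c i L f) ∈ I := by
      have := division (c j) i j (hL j (List.mem_cons_self)) (T c i L f)
      have heq : T c i L f - S (c j) i j (T c i L f)
          = Q (c j) i j (T c i L f) * (X j - MvPowerSeries.C (σ := Fin n) (R := k) (c j) * X i) := by
        rw [sub_eq_iff_eq_add]
        exact this
      rw [heq]
      exact I.mul_mem_left _ (hI j (List.mem_cons_self))
    simpa using I.add_mem h1 h2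


/-- Exponents of total degree `m`. -/
noncomputable def degSet (n m : ℕ) : Finset (Fin n →₀ ℕ) :=
  (Finset.Iic (Finsupp.equivFunOnFinite.symm fun _ => m)).filter fun d => ∑ j, d j = m

theorem mem_degSet {n m : ℕ} (d : Fin n →₀ ℕ) : d ∈ degSet n m ↔ ∑ j, d j = m := by
  constructor
  · intro h
    exact (Finset.mem_filter.mp h).2
  · intro h
    refine Finset.mem_filter.mpr ⟨Finset.mem_Iic.mpr ?_, h⟩
    intro t
    have : d t ≤ ∑ j, d j :=
      Finset.single_le_sum (f := fun j => d j) (fun _ _ => Nat.zero_le _) (Finset.mem_univ t)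
    simpa [h] using this

/-- The degree-`m` part of "substitute `x_j := ξ_j t`". -/
noncomputable def phi (ξ : Fin n → k) (m : ℕ) (f : MvPowerSeries (Fin n) k) : k :=
  ∑ d ∈ degSet n m, MvPowerSeries.coeff (R := k) d f * ∏ j, ξ j ^ d j

theorem phi_add (ξ : Fin n → k) (m : ℕ) (f g : MvPowerSeries (Fin n) k) :
    phi ξ m (f + g) = phi ξ m f + phi ξ m g := by
  simp [phi, add_mul, Finset.sum_add_distrib]

theorem phi_zero (ξ : Fin n → k) (m : ℕ) : phi ξ m (0 : MvPowerSeries (Fin n) k) = 0 := by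
  simp [phi]

theorem phi_C_mul (ξ : Fin n → k) (m : ℕ) (a : k) (f : MvPowerSeries (Fin n) k) :
    phi ξ m (MvPowerSeries.C (σ := Fin n) (R := k) a * f) = a * phi ξ m f := by
  simp [phi, Finset.mul_sum, mul_assoc]

theorem single_sum_eq {n : ℕ} (b : Fin n) (a : ℕ) : ∑ j, Finsupp.single b a j = a := by
  rw [Finset.sum_eq_single b]
  · simp
  · intro j _ hj
    simp [Finsupp.single_apply, Ne.symm hj]
  · simp

theorem prod_pow_single {n : ℕ} (ξ : Fin n → k) (b : Fin n) (a : ℕ) :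
    ∏ j, ξ j ^ (Finsupp.single b a) j = ξ b ^ a := by
  rw [Finset.prod_eq_single b]
  · simp
  · intro j _ hj
    simp [Finsupp.single_apply, Ne.symm hj]
  · simp

theorem phi_mul_X (ξ : Fin n → k) (m : ℕ) (b : Fin n) (f : MvPowerSeries (Fin n) k) :
    phi ξ (m + 1) (f * X b) = ξ b * phi ξ m f := by
  classical
  rw [phi, ← Finset.sum_filter_add_sum_filter_not (degSet n (m + 1)) (fun d => d b = 0)]
  have h1 : ∑ d ∈ (degSet n (m + 1)).filter (fun d => d b = 0),
      MvPowerSeries.coeff (R := k) d (f * X b) * ∏ j, ξ j ^ d j = 0 := by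
    refine Finset.sum_eq_zero fun d hd => ?_
    rw [coeff_mul_X', if_pos (Finset.mem_filter.mp hd).2, zero_mul]
  rw [h1, zero_add, phi, Finset.mul_sum]
  refine Finset.sum_nbij' (i := fun d => d - Finsupp.single b 1)
    (j := fun e => e + Finsupp.single b 1) ?_ ?_ ?_ ?_ ?_
  · intro d hd
    obtain ⟨hd1, hd2⟩ := Finset.mem_filter.mp hd
    have hle : Finsupp.single b 1 ≤ d := Finsupp.single_le_iff.mpr (by omega)
    show (d - Finsupp.single b 1 : Fin n →₀ ℕ) ∈ degSet n m
    rw [mem_degSet]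
    have hsum : ∑ j, (d - Finsupp.single b 1 : Fin n →₀ ℕ) j + ∑ j, Finsupp.single b 1 j
        = ∑ j, d j := by
      rw [← Finset.sum_add_distrib]
      refine Finset.sum_congr rfl fun j _ => ?_
      rw [← Finsupp.add_apply, tsub_add_cancel_of_le hle]
    rw [mem_degSet] at hd1
    rw [single_sum_eq] at hsum
    omega
  · intro e he
    rw [mem_degSet] at he
    refine Finset.mem_filter.mpr ⟨(mem_degSet _).mpr ?_, ?_⟩
    · have : ∀ j, (e + Finsupp.single b 1 : Fin n →₀ ℕ) j = e j + Finsupp.single b 1 j :=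
        fun j => rfl
      simp only [Finsupp.add_apply, Finset.sum_add_distrib, he, single_sum_eq]
    · simp [Finsupp.add_apply]
  · intro d hd
    have hd2 := (Finset.mem_filter.mp hd).2
    have hle : Finsupp.single b 1 ≤ d := Finsupp.single_le_iff.mpr (by omega)
    show d - Finsupp.single b 1 + Finsupp.single b 1 = d
    exact tsub_add_cancel_of_le hle
  · intro e he
    exact add_tsub_cancel_right _ _
  · intro d hd
    obtain ⟨hd1, hd2⟩ := Finset.mem_filter.mp hd
    have hle : Finsupp.single b 1 ≤ d := Finsupp.single_le_iff.mpr (by omega)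
    rw [coeff_mul_X', if_neg hd2]
    have hξ : ∏ j, ξ j ^ d j
        = ξ b * ∏ j, ξ j ^ (d - Finsupp.single b 1 : Fin n →₀ ℕ) j := by
      have hd' : d = (d - Finsupp.single b 1) + Finsupp.single b 1 :=
        (tsub_add_cancel_of_le hle).symm
      conv_lhs => rw [hd']
      simp only [Finsupp.add_apply, pow_add, Finset.prod_mul_distrib, prod_pow_single]
      ring
    rw [hξ]
    ring


theorem phi_sub (ξ : Fin n → k) (m : ℕ) (f g : MvPowerSeries (Fin n) k) :
    phi ξ m (f - g) = phi ξ m f - phi ξ m g := by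
  simp [phi, sub_mul, Finset.sum_sub_distrib]

theorem phi_mul_X_zero (ξ : Fin n → k) (b : Fin n) (f : MvPowerSeries (Fin n) k) :
    phi ξ 0 (f * X b) = 0 := by
  refine Finset.sum_eq_zero fun d hd => ?_
  rw [mem_degSet] at hd
  have hdb : d b = 0 := by
    have : d b ≤ ∑ j, d j :=
      Finset.single_le_sum (f := fun j => d j) (fun _ _ => Nat.zero_le _) (Finset.mem_univ b)
    omega
  rw [coeff_mul_X', if_pos hdb, zero_mul]

theorem phi_mem (ξ : Fin n → k) (m : ℕ) (f : MvPowerSeries (Fin n) k)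
    (hf : f ∈ lineIdeal ξ) : phi ξ m f = 0 := by
  have key : ∀ r : MvPowerSeries (Fin n) k, ∀ m : ℕ, phi ξ m (r * f) = 0 := by
    refine Submodule.span_induction
      (p := fun x _ => ∀ r : MvPowerSeries (Fin n) k, ∀ m : ℕ, phi ξ m (r * x) = 0)
      ?_ ?_ ?_ ?_ hf
    · rintro x ⟨a, b, rfl⟩ r m
      have hexp : r * (MvPowerSeries.C (σ := Fin n) (R := k) (ξ a) * X b
          - MvPowerSeries.C (σ := Fin n) (R := k) (ξ b) * X a)
          = MvPowerSeries.C (σ := Fin n) (R := k) (ξ a) * (r * X b)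
            - MvPowerSeries.C (σ := Fin n) (R := k) (ξ b) * (r * X a) := by ring
      rw [hexp, phi_sub, phi_C_mul, phi_C_mul]
      cases m with
      | zero => rw [phi_mul_X_zero, phi_mul_X_zero]; ring
      | succ m => rw [phi_mul_X, phi_mul_X]; ring
    · intro r m
      rw [mul_zero, phi_zero]
    · intro x y _ _ hx hy r m
      rw [mul_add, phi_add, hx, hy, add_zero]
    · intro a x _ hx r m
      rw [smul_eq_mul, show r * (a * x) = (r * a) * x by ring, hx]
  simpa using key 1 m

/-- Substitution `t ↦ u • x_i` from one-variable power series. -/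
noncomputable def psiFun (u : k) (i : Fin n) (g : PowerSeries k) :
    MvPowerSeries (Fin n) k :=
  fun d => if d = Finsupp.single i (d i) then PowerSeries.coeff (R := k) (d i) g * u ^ (d i) else 0

theorem coeff_psiFun (u : k) (i : Fin n) (g : PowerSeries k) (d : Fin n →₀ ℕ) :
    MvPowerSeries.coeff (R := k) d (psiFun u i g) =
      if d = Finsupp.single i (d i) then PowerSeries.coeff (R := k) (d i) g * u ^ (d i) else 0 := rfl

theorem psiFun_mul (u : k) (i : Fin n) (g h : PowerSeries k) :
    psiFun u i (g * h) = psiFun u i g * psiFun u i h := by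
  classical
  apply MvPowerSeries.ext
  intro d
  rw [MvPowerSeries.coeff_mul, coeff_psiFun]
  by_cases hd : d = Finsupp.single i (d i)
  · rw [if_pos hd, PowerSeries.coeff_mul, Finset.sum_mul]
    conv_rhs => rw [show d = Finsupp.single i (d i) from hd]
    rw [Finsupp.antidiagonal_single, Finset.sum_map]
    refine Finset.sum_congr rfl fun p hp => ?_
    have hp' : p.1 + p.2 = d i := Finset.HasAntidiagonal.mem_antidiagonal.mp hp
    simp only [Function.Embedding.coe_prodMap, Function.Embedding.coeFn_mk, Prod.map_apply,
      Prod.map_fst, Prod.map_snd]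
    rw [coeff_psiFun, coeff_psiFun, Finsupp.single_eq_same, if_pos rfl,
      Finsupp.single_eq_same, if_pos rfl]
    rw [← hp', pow_add]
    ring
  · rw [if_neg hd]
    refine (Finset.sum_eq_zero fun p hp => ?_).symm
    have hpd : p.1 + p.2 = d := Finset.HasAntidiagonal.mem_antidiagonal.mp hp
    by_cases h1 : p.1 = Finsupp.single i (p.1 i)
    · by_cases h2 : p.2 = Finsupp.single i (p.2 i)
      · exfalso
        apply hd
        have : d = Finsupp.single i (p.1 i + p.2 i) := by
          rw [← hpd, Finsupp.single_add]
          exact congrArg₂ (· + ·) h1 h2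
        rw [this, Finsupp.single_eq_same]
      · rw [coeff_psiFun u i h p.2, if_neg h2, mul_zero]
    · rw [coeff_psiFun u i g p.1, if_neg h1, zero_mul]

theorem psiFun_one (u : k) (i : Fin n) : psiFun u i 1 = 1 := by
  classical
  apply MvPowerSeries.ext
  intro d
  rw [coeff_psiFun, MvPowerSeries.coeff_one]
  by_cases hd0 : d = 0
  · rw [if_pos hd0, if_pos]
    · subst hd0
      simp
    · subst hd0
      simp
  · rw [if_neg hd0]
    by_cases hd : d = Finsupp.single i (d i)
    · rw [if_pos hd]
      have hdi : d i ≠ 0 := by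
        intro h
        apply hd0
        rw [hd, h, Finsupp.single_zero]
      rw [PowerSeries.coeff_one, if_neg hdi, zero_mul]
    · rw [if_neg hd]

theorem psiFun_add (u : k) (i : Fin n) (g h : PowerSeries k) :
    psiFun u i (g + h) = psiFun u i g + psiFun u i h := by
  classical
  apply MvPowerSeries.ext
  intro d
  rw [map_add, coeff_psiFun, coeff_psiFun, coeff_psiFun]
  by_cases hd : d = Finsupp.single i (d i)
  · rw [if_pos hd, if_pos hd, if_pos hd, map_add, add_mul]
  · rw [if_neg hd, if_neg hd, if_neg hd, add_zero]

/-- `ψ : k[[t]] →+* k[[x₁,…,xₙ]]`, `t ↦ u·xᵢ`. -/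
noncomputable def psi (u : k) (i : Fin n) : PowerSeries k →+* MvPowerSeries (Fin n) k where
  toFun := psiFun u i
  map_one' := psiFun_one u i
  map_mul' := psiFun_mul u i
  map_zero' := by
    apply MvPowerSeries.ext
    intro d
    rw [coeff_psiFun]
    simp
  map_add' := psiFun_add u i

theorem phi_psi (ξ : Fin n → k) (i : Fin n) (hi : ξ i ≠ 0) (m : ℕ) (g : PowerSeries k) :
    phi ξ m (psi (ξ i)⁻¹ i g) = PowerSeries.coeff (R := k) m g := by
  classical
  have hmem : Finsupp.single i m ∈ degSet n m := (mem_degSet _).mpr (single_sum_eq i m)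
  rw [phi, Finset.sum_eq_single (Finsupp.single i m)]
  · show (if Finsupp.single i m = Finsupp.single i ((Finsupp.single i m) i) then
        PowerSeries.coeff (R := k) ((Finsupp.single i m) i) g * ((ξ i)⁻¹) ^ ((Finsupp.single i m) i)
      else 0) * ∏ j, ξ j ^ (Finsupp.single i m) j = PowerSeries.coeff (R := k) m g
    rw [Finsupp.single_eq_same, if_pos rfl, prod_pow_single]
    rw [mul_assoc, inv_pow, inv_mul_cancel₀ (pow_ne_zero m hi), mul_one]
  · intro d hd hne
    rw [mem_degSet] at hd
    show (if d = Finsupp.single i (d i) then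
        PowerSeries.coeff (R := k) (d i) g * ((ξ i)⁻¹) ^ (d i) else 0) * ∏ j, ξ j ^ d j = 0
    rw [if_neg, zero_mul]
    intro h
    apply hne
    rw [h] at hd ⊢
    rw [single_sum_eq] at hd
    rw [hd]
  · intro h
    exact absurd hmem h


theorem gen_mem (ξ : Fin n → k) (i : Fin n) (hi : ξ i ≠ 0) (j : Fin n) :
    X j - MvPowerSeries.C (σ := Fin n) (R := k) ((ξ i)⁻¹ * ξ j) * X i ∈ lineIdeal ξ := by
  have hgen : MvPowerSeries.C (σ := Fin n) (R := k) (ξ i) * X j - MvPowerSeries.C (σ := Fin n) (R := k) (ξ j) * X i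
      ∈ lineIdeal ξ := Ideal.subset_span ⟨i, j, rfl⟩
  have hre : MvPowerSeries.C (σ := Fin n) (R := k) ((ξ i)⁻¹)
      * (MvPowerSeries.C (σ := Fin n) (R := k) (ξ i) * X j - MvPowerSeries.C (σ := Fin n) (R := k) (ξ j) * X i)
      = X j - MvPowerSeries.C (σ := Fin n) (R := k) ((ξ i)⁻¹ * ξ j) * X i := by
    rw [mul_sub, ← mul_assoc, ← map_mul, inv_mul_cancel₀ hi, map_one, one_mul,
      ← mul_assoc, ← map_mul]
  rw [← hre]
  exact Ideal.mul_mem_left _ _ hgen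

end LineAux

theorem line_quotient_powerSeries_aux {n : ℕ} (hn : 2 ≤ n) {k : Type*} [Field k]
    (ξ : Fin n → k) (hξ : ξ ≠ 0) :
    Nonempty ((MvPowerSeries (Fin n) k ⧸ lineIdeal ξ) ≃+* PowerSeries k) ∧
      (lineIdeal ξ).IsPrime := by
  classical
  obtain ⟨i, hi⟩ : ∃ i, ξ i ≠ 0 := by
    by_contra h
    push_neg at h
    exact hξ (funext fun j => h j)
  set u : k := (ξ i)⁻¹ with hu
  set c : Fin n → k := fun j => (ξ i)⁻¹ * ξ j with hc
  set Ψ : PowerSeries k →+* MvPowerSeries (Fin n) k ⧸ lineIdeal ξ :=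
    (Ideal.Quotient.mk (lineIdeal ξ)).comp (LineAux.psi u i) with hΨ
  have hinj : Function.Injective Ψ := by
    rw [injective_iff_map_eq_zero]
    intro g hg
    have hmem : LineAux.psi u i g ∈ lineIdeal ξ := by
      rwa [hΨ, RingHom.comp_apply, Ideal.Quotient.eq_zero_iff_mem] at hg
    apply PowerSeries.ext
    intro m
    rw [← LineAux.phi_psi ξ i hi m g, map_zero]
    exact LineAux.phi_mem ξ m _ hmem
  have hsurj : Function.Surjective Ψ := by
    intro x
    obtain ⟨f, rfl⟩ := Ideal.Quotient.mk_surjective x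
    set L : List (Fin n) := (Finset.univ.erase i).toList with hLdef
    have hL : ∀ j ∈ L, j ≠ i := fun j hj =>
      (Finset.mem_erase.mp (Finset.mem_toList.mp hj)).1
    have hI : ∀ j ∈ L, X j - MvPowerSeries.C (σ := Fin n) (R := k) (c j) * X i ∈ lineIdeal ξ :=
      fun j _ => LineAux.gen_mem ξ i hi j
    set F : MvPowerSeries (Fin n) k := LineAux.T c i L f with hF
    have h1 : f - F ∈ lineIdeal ξ := LineAux.sub_T_mem c i L hL _ hI f
    refine ⟨PowerSeries.mk fun m => F (Finsupp.single i m) * (ξ i) ^ m, ?_⟩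
    have hpsiF : LineAux.psi u i (PowerSeries.mk fun m => F (Finsupp.single i m) * (ξ i) ^ m)
        = F := by
      apply MvPowerSeries.ext
      intro d
      rw [show (MvPowerSeries.coeff (R := k) d) (LineAux.psi u i
          (PowerSeries.mk fun m => F (Finsupp.single i m) * (ξ i) ^ m))
        = LineAux.psiFun u i (PowerSeries.mk fun m => F (Finsupp.single i m) * (ξ i) ^ m) d
        from rfl]
      rw [LineAux.psiFun]
      by_cases hd : d = Finsupp.single i (d i)
      · rw [if_pos hd, PowerSeries.coeff_mk, hu, mul_assoc, ← mul_pow, mul_inv_cancel₀ hi,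
          one_pow, mul_one]
        conv_rhs => rw [hd]
        rfl
      · rw [if_neg hd]
        have : ∃ l, l ≠ i ∧ d l ≠ 0 := by
          by_contra h
          push_neg at h
          apply hd
          ext t
          rcases eq_or_ne t i with rfl | ht
          · rw [Finsupp.single_eq_same]
          · rw [h t ht, Finsupp.single_apply, if_neg (fun hh => ht hh.symm)]
        obtain ⟨l, hli, hdl⟩ := this
        have hlL : l ∈ L := Finset.mem_toList.mpr
          (Finset.mem_erase.mpr ⟨hli, Finset.mem_univ l⟩)
        exact (LineAux.T_support c i L f l hL hlL d hdl).symm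
    rw [hΨ, RingHom.comp_apply, hpsiF]
    rw [Ideal.Quotient.mk_eq_mk_iff_sub_mem]
    simpa using (lineIdeal ξ).neg_mem h1
  have e := RingEquiv.ofBijective Ψ ⟨hinj, hsurj⟩
  have hdom : IsDomain (MvPowerSeries (Fin n) k ⧸ lineIdeal ξ) :=
    Function.Injective.isDomain e.symm.toRingHom e.symm.injective
  exact ⟨⟨e.symm⟩, (Ideal.Quotient.isDomain_iff_prime _).mp hdom⟩

/-- The line through the origin in direction `ξ ≠ 0` is a smooth curve germ:
`k[[x₁,…,xₙ]]/I_ξ` is isomorphic to a formal power series ring in one variable `k[[t]]`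
(via `xⱼ ↦ ξⱼ·t` after normalizing); in particular `I_ξ` is prime, and the quotient
is a regular local ring of dimension 1 (as `k[[t]]` is). -/
theorem line_quotient_powerSeries {n : ℕ} (hn : 2 ≤ n) {k : Type*} [Field k]
    (ξ : Fin n → k) (hξ : ξ ≠ 0) :
    Nonempty ((MvPowerSeries (Fin n) k ⧸ lineIdeal ξ) ≃+* PowerSeries k) ∧
      (lineIdeal ξ).IsPrime := by
  exact line_quotient_powerSeries_aux hn ξ hξ
end
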